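/- Let A be an abelian category and F a class of morphisms between projective objects of A. Let B ⊆ A be the full subcategory of objects C such that Hom_A(f, C) is an isomorphism for every f ∈ F. Then B is closed under infinite products, kernels, extensions, and cokernels in A; hence B is an abelian category and the inclusion B → A is exact. -/

import Mathlib

open CategoryTheory CategoryTheory.Limits

universe w' v u

section Aux

variable {A : Type u} [Category.{v} A] [Abelian A] {B : Set A} {F : MorphismProperty A}

/-- `B` is closed under isomorphisms. -/
lemma auxPerp_iso (hB : ∀ C : A, C ∈ B ↔ ∀ ⦃U V : A⦄ (f : U ⟶ V), F f →
      Function.Bijective (fun g : V ⟶ C => f ≫ g))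
    {X Y : A} (e : X ≅ Y) (hX : X ∈ B) : Y ∈ B := by
  rw [hB] at hX ⊢
  intro U V f hf
  constructor
  · intro g₁ g₂ hg
    dsimp only at hg
    rw [← Category.comp_id g₁, ← Category.comp_id g₂, ← e.inv_hom_id, ← Category.assoc,
      ← Category.assoc]
    congr 1
    apply (hX f hf).1
    dsimp only
    rw [← Category.assoc, ← Category.assoc, hg]
  · intro k
    obtain ⟨g, hg⟩ := (hX f hf).2 (k ≫ e.inv)
    refine ⟨g ≫ e.hom, ?_⟩
    dsimp only at hg ⊢
    rw [← Category.assoc, hg, Category.assoc, e.inv_hom_id, Category.comp_id]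

/-- `B` is closed under all limits. -/
lemma auxPerp_limit (hB : ∀ C : A, C ∈ B ↔ ∀ ⦃U V : A⦄ (f : U ⟶ V), F f →
      Function.Bijective (fun g : V ⟶ C => f ≫ g))
    {J : Type*} [Category J] {D : J ⥤ A} (c : Cone D) (hc : IsLimit c)
    (h : ∀ j, D.obj j ∈ B) : c.pt ∈ B := by
  rw [hB]
  intro U V f hf
  constructor
  · intro g₁ g₂ hg
    dsimp only at hg
    refine hc.hom_ext fun j => ?_
    apply ((hB _).mp (h j) f hf).1
    dsimp only
    rw [← Category.assoc, ← Category.assoc, hg]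
  · intro k
    have hsurj : ∀ j, ∃ g : V ⟶ D.obj j, f ≫ g = k ≫ c.π.app j := fun j =>
      ((hB _).mp (h j) f hf).2 (k ≫ c.π.app j)
    choose g hg using hsurj
    have hcone : ∀ {j j' : J} (α : j ⟶ j'), g j ≫ D.map α = g j' := by
      intro j j' α
      apply ((hB _).mp (h j') f hf).1
      dsimp only
      rw [← Category.assoc, hg j, Category.assoc, c.w α, hg j']
    refine ⟨hc.lift ⟨V, ⟨fun j => g j, fun j j' α => by
      dsimp; rw [Category.id_comp, hcone]⟩⟩, ?_⟩
    dsimp only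
    refine hc.hom_ext fun j => ?_
    rw [Category.assoc, hc.fac, hg]

/-- `B` is closed under cokernels. -/
lemma auxPerp_coker
    (hproj : ∀ ⦃U V : A⦄ (f : U ⟶ V), F f → Projective U ∧ Projective V)
    (hB : ∀ C : A, C ∈ B ↔ ∀ ⦃U V : A⦄ (f : U ⟶ V), F f →
      Function.Bijective (fun g : V ⟶ C => f ≫ g))
    {X Y : A} (hX : X ∈ B) (hY : Y ∈ B) (g : X ⟶ Y) : cokernel g ∈ B := by
  rw [hB]
  intro U V f hf
  obtain ⟨hU, hV⟩ := hproj f hf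
  haveI := hU; haveI := hV
  constructor
  · suffices hz : ∀ h : V ⟶ cokernel g, f ≫ h = 0 → h = 0 by
      intro h₁ h₂ hh
      dsimp only at hh
      exact sub_eq_zero.mp (hz _ (by rw [Preadditive.comp_sub, hh, sub_self]))
    intro h hfh
    have hh' : Projective.factorThru h (cokernel.π g) ≫ cokernel.π g = h :=
      Projective.factorThru_comp _ _
    set h' : V ⟶ Y := Projective.factorThru h (cokernel.π g) with h'def
    have h0 : (f ≫ h') ≫ cokernel.π g = 0 := by rw [Category.assoc, hh', hfh]
    set w : U ⟶ Abelian.image g := kernel.lift (cokernel.π g) (f ≫ h') h0 with wdef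
    set t : U ⟶ X := Projective.factorThru w (Abelian.factorThruImage g) with tdef
    have ht : t ≫ g = f ≫ h' := by
      have htw : t ≫ Abelian.factorThruImage g = w := Projective.factorThru_comp _ _
      calc t ≫ g = t ≫ Abelian.factorThruImage g ≫ Abelian.image.ι g := by
            rw [Abelian.image.fac]
        _ = w ≫ kernel.ι (cokernel.π g) := by rw [← Category.assoc, htw]
        _ = f ≫ h' := kernel.lift_ι _ _ _
    obtain ⟨s, hs⟩ := ((hB X).mp hX f hf).2 t
    dsimp only at hs
    have hsg : s ≫ g = h' := by
      apply ((hB Y).mp hY f hf).1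
      dsimp only
      rw [← Category.assoc, hs, ht]
    rw [← hh', ← hsg, Category.assoc, cokernel.condition, Limits.comp_zero]
  · intro k
    obtain ⟨h, hh⟩ := ((hB Y).mp hY f hf).2 (Projective.factorThru k (cokernel.π g))
    dsimp only at hh
    refine ⟨h ≫ cokernel.π g, ?_⟩
    dsimp only
    rw [← Category.assoc, hh, Projective.factorThru_comp]

/-- `B` is closed under extensions. -/
lemma auxPerp_ext
    (hproj : ∀ ⦃U V : A⦄ (f : U ⟶ V), F f → Projective U ∧ Projective V)
    (hB : ∀ C : A, C ∈ B ↔ ∀ ⦃U V : A⦄ (f : U ⟶ V), F f →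
      Function.Bijective (fun g : V ⟶ C => f ≫ g))
    (S : ShortComplex A) (hS : S.ShortExact) (h1 : S.X₁ ∈ B) (h3 : S.X₃ ∈ B) :
    S.X₂ ∈ B := by
  haveI := hS.mono_f
  haveI := hS.epi_g
  rw [hB]
  intro U V f hf
  obtain ⟨hU, hV⟩ := hproj f hf
  haveI := hU; haveI := hV
  constructor
  · suffices hz : ∀ h : V ⟶ S.X₂, f ≫ h = 0 → h = 0 by
      intro h₁ h₂ hh
      dsimp only at hh
      exact sub_eq_zero.mp (hz _ (by rw [Preadditive.comp_sub, hh, sub_self]))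
    intro h hfh
    have h3' : h ≫ S.g = 0 := by
      apply ((hB _).mp h3 f hf).1
      dsimp only
      rw [← Category.assoc, hfh, Limits.zero_comp, Limits.comp_zero]
    have hu : hS.exact.lift h h3' ≫ S.f = h := hS.exact.lift_f h h3'
    have : hS.exact.lift h h3' = 0 := by
      apply ((hB _).mp h1 f hf).1
      dsimp only
      rw [Limits.comp_zero, ← cancel_mono S.f, Category.assoc, hu, hfh, Limits.zero_comp]
    rw [← hu, this, Limits.zero_comp]
  · intro k
    obtain ⟨w, hw⟩ := ((hB _).mp h3 f hf).2 (k ≫ S.g)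
    dsimp only at hw
    have hw' : Projective.factorThru w S.g ≫ S.g = w := Projective.factorThru_comp _ _
    set w' : V ⟶ S.X₂ := Projective.factorThru w S.g with w'def
    have hzero : (k - f ≫ w') ≫ S.g = 0 := by
      rw [Preadditive.sub_comp, Category.assoc, hw', hw, sub_self]
    have hd : hS.exact.lift _ hzero ≫ S.f = k - f ≫ w' := hS.exact.lift_f _ _
    obtain ⟨e, he⟩ := ((hB _).mp h1 f hf).2 (hS.exact.lift _ hzero)
    dsimp only at he
    refine ⟨w' + e ≫ S.f, ?_⟩
    dsimp only
    rw [Preadditive.comp_add, ← Category.assoc, he, hd, add_comm, sub_add_cancel]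

/-- `B` is closed under finite colimits. -/
lemma auxPerp_colim
    (hproj : ∀ ⦃U V : A⦄ (f : U ⟶ V), F f → Projective U ∧ Projective V)
    (hB : ∀ C : A, C ∈ B ↔ ∀ ⦃U V : A⦄ (f : U ⟶ V), F f →
      Function.Bijective (fun g : V ⟶ C => f ≫ g))
    {J : Type} [SmallCategory J] [FinCategory J] (D : J ⥤ A)
    (h : ∀ j, D.obj j ∈ B) (c : Cocone D) (hc : IsColimit c) : c.pt ∈ B := by
  classical
  haveI := Abelian.hasFiniteBiproducts (C := A)
  -- finite coproducts of objects of `B` lie in `B`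
  have hcop : ∀ (γ : Type) [Fintype γ] (q : γ → A), (∀ i, q i ∈ B) → (∐ q) ∈ B := by
    intro γ _ q hq
    have hprod : (∏ᶜ q) ∈ B :=
      auxPerp_limit hB (limit.cone (Discrete.functor q)) (limit.isLimit _)
        (fun j => hq j.as)
    exact auxPerp_iso hB ((biproduct.isoProduct q).symm ≪≫ biproduct.isoCoproduct q) hprod
  set s : (∐ fun f : Σ p : J × J, p.1 ⟶ p.2 => D.obj f.1.1) ⟶ ∐ (fun j => D.obj j) :=
    Sigma.desc fun f : Σ p : J × J, p.1 ⟶ p.2 => D.map f.2 ≫ Sigma.ι (fun j => D.obj j) f.1.2 with sdef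
  set t : (∐ fun f : Σ p : J × J, p.1 ⟶ p.2 => D.obj f.1.1) ⟶ ∐ (fun j => D.obj j) :=
    Sigma.desc fun f : Σ p : J × J, p.1 ⟶ p.2 => Sigma.ι (fun j => D.obj j) f.1.1 with tdef
  have hbc := HasColimitOfHasCoproductsOfHasCoequalizers.buildIsColimit s t
    (fun f => by rw [sdef]; simp) (fun f => by rw [tdef]; simp)
    (colimit.isColimit _) (colimit.isColimit _)
    (Preadditive.isColimitCoforkOfCokernelCofork (cokernelIsCokernel (s - t)))
  have hcoker : cokernel (s - t) ∈ B :=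
    auxPerp_coker hproj hB (hcop _ _ (fun f : Σ p : J × J, p.1 ⟶ p.2 => h f.1.1)) (hcop _ _ (fun j => h j)) (s - t)
  exact auxPerp_iso hB
    (show (cokernel (s - t) : A) ≅ c.pt from hbc.coconePointUniqueUpToIso hc) hcoker

/-- In the presence of a nice inclusion functor, coimage-image comparisons are isomorphisms. -/
lemma auxPerp_isIso_comparison
    {C : Type*} [Category C] [Preadditive C] [HasKernels C] [HasCokernels C]
    {D : Type*} [Category D] [Abelian D]
    (G : C ⥤ D) [G.Full] [G.Faithful] [G.PreservesZeroMorphisms]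
    [PreservesFiniteLimits G] [PreservesFiniteColimits G]
    {X Y : C} (f : X ⟶ Y) : IsIso (Abelian.coimageImageComparison f) := by
  suffices h : IsIso (G.map (Abelian.coimageImageComparison f)) by
    exact isIso_of_reflects_iso _ G
  -- kernel side
  have hk : kernel.ι (G.map f) = inv (kernelComparison f G) ≫ G.map (kernel.ι f) := by
    rw [← kernelComparison_comp_ι f G, IsIso.inv_hom_id_assoc]
  have h2 := isCokernelEpiComp (isColimitOfHasCokernelOfPreservesColimit G (kernel.ι f))
    (inv (kernelComparison f G)) hk
  let α : Abelian.coimage (G.map f) ≅ G.obj (Abelian.coimage f) :=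
    (colimit.isColimit _).coconePointUniqueUpToIso h2
  have hα : cokernel.π (kernel.ι (G.map f)) ≫ α.hom = G.map (cokernel.π (kernel.ι f)) :=
    (colimit.isColimit _).comp_coconePointUniqueUpToIso_hom h2 WalkingParallelPair.one
  -- cokernel side
  have hco : cokernel.π (G.map f) = G.map (cokernel.π f) ≫ inv (cokernelComparison f G) := by
    rw [← π_comp_cokernelComparison f G, Category.assoc, IsIso.hom_inv_id, Category.comp_id]
  have h4 := isKernelCompMono (isLimitOfHasKernelOfPreservesLimit G (cokernel.π f))
    (inv (cokernelComparison f G)) hco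
  let β : G.obj (Abelian.image f) ≅ Abelian.image (G.map f) :=
    h4.conePointUniqueUpToIso (limit.isLimit _)
  have hβ : β.hom ≫ kernel.ι (cokernel.π (G.map f)) = G.map (kernel.ι (cokernel.π f)) :=
    h4.conePointUniqueUpToIso_hom_comp (limit.isLimit _) WalkingParallelPair.zero
  have lhs : cokernel.π (kernel.ι (G.map f)) ≫ α.hom ≫
      G.map (Abelian.coimageImageComparison f) ≫ β.hom ≫ kernel.ι (cokernel.π (G.map f)) =
      G.map f := by
    rw [← Category.assoc, hα, hβ, ← G.map_comp, ← G.map_comp]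
    exact congrArg G.map (Abelian.coimage_image_factorisation f)
  have key : α.hom ≫ G.map (Abelian.coimageImageComparison f) ≫ β.hom =
      Abelian.coimageImageComparison (G.map f) := by
    rw [← cancel_mono (kernel.ι (cokernel.π (G.map f))),
      ← cancel_epi (cokernel.π (kernel.ι (G.map f)))]
    simp only [Category.assoc]
    rw [lhs]
    exact (Abelian.coimage_image_factorisation (G.map f)).symm
  have : G.map (Abelian.coimageImageComparison f) =
      α.inv ≫ (α.hom ≫ G.map (Abelian.coimageImageComparison f) ≫ β.hom) ≫ β.inv := by
    simp
  rw [this, key]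
  infer_instance

end Aux

/-- Let `A` be an abelian category and `F` a class of morphisms between projective objects
of `A`.  The full subcategory `B = F^{⊥₀}` of objects `C` such that `Hom_A(f, C)` is an
isomorphism for every `f ∈ F` is closed under infinite products, kernels, extensions and
cokernels in `A`; hence `B` is an abelian category and the inclusion `B → A` is exact. -/
theorem right_zero_perpendicular_to_morphisms_of_projectives_closure
    {A : Type u} [Category.{v} A] [Abelian A]
    (F : MorphismProperty A)
    (hproj : ∀ ⦃U V : A⦄ (f : U ⟶ V), F f → Projective U ∧ Projective V)
    (B : Set A)
    (hB : ∀ C : A, C ∈ B ↔ ∀ ⦃U V : A⦄ (f : U ⟶ V), F f →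
      Function.Bijective (fun g : V ⟶ C => f ≫ g)) :
    -- closed under infinite products (whenever they exist in `A`)
    (∀ (ι : Type w') (f : ι → A), (∀ i, f i ∈ B) →
      ∀ (c : Fan f), IsLimit c → c.pt ∈ B) ∧
    -- closed under kernels
    (∀ (X Y : A), X ∈ B → Y ∈ B → ∀ g : X ⟶ Y, kernel g ∈ B) ∧
    -- closed under extensions
    (∀ S : ShortComplex A, S.ShortExact → S.X₁ ∈ B → S.X₃ ∈ B → S.X₂ ∈ B) ∧
    -- closed under cokernels
    (∀ (X Y : A), X ∈ B → Y ∈ B → ∀ g : X ⟶ Y, cokernel g ∈ B) ∧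
    -- hence `B` is an abelian category whose inclusion into `A` is exact
    (∃ _ : Abelian (ObjectProperty.FullSubcategory (· ∈ B)),
      Nonempty (PreservesFiniteLimits (ObjectProperty.ι (· ∈ B))) ∧
      Nonempty (PreservesFiniteColimits (ObjectProperty.ι (· ∈ B)))) := by
  refine ⟨?_, ?_, ?_, ?_, ?_⟩
  · intro ι f hf c hc
    exact auxPerp_limit hB c hc (fun j => hf j.as)
  · intro X Y hX hY g
    exact auxPerp_limit hB (limit.cone (parallelPair g 0)) (limit.isLimit _)
      (by rintro (_ | _) <;> assumption)
  · intro S hS h1 h3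
    exact auxPerp_ext hproj hB S hS h1 h3
  · intro X Y hX hY g
    exact auxPerp_coker hproj hB hX hY g
  · -- abelian structure and exactness of the inclusion
    have hLim : ∀ (J : Type) [SmallCategory J],
        ObjectProperty.IsClosedUnderLimitsOfShape (fun X : A => X ∈ B) J :=
      fun J _ => ⟨fun X ⟨p⟩ => auxPerp_limit hB _ p.isLimit p.prop_diag_obj⟩
    have hColim : ∀ (J : Type) [SmallCategory J] [FinCategory J],
        ObjectProperty.IsClosedUnderColimitsOfShape (fun X : A => X ∈ B) J :=
      fun J _ _ => ⟨fun X ⟨p⟩ => auxPerp_colim hproj hB p.diag p.prop_diag_obj _ p.isColimit⟩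
    letI : HasFiniteLimits (ObjectProperty.FullSubcategory (· ∈ B)) :=
      ⟨fun J _ _ => haveI := hLim J; inferInstance⟩
    letI : HasFiniteColimits (ObjectProperty.FullSubcategory (· ∈ B)) :=
      ⟨fun J _ _ => haveI := hColim J; inferInstance⟩
    letI : PreservesFiniteLimits (ObjectProperty.ι (· ∈ B)) :=
      ⟨fun J _ _ =>
        haveI := hLim J
        inferInstance⟩
    letI : PreservesFiniteColimits (ObjectProperty.ι (· ∈ B)) :=
      ⟨fun J _ _ =>
        haveI := hColim J
        inferInstance⟩
    letI : HasKernels (ObjectProperty.FullSubcategory (· ∈ B)) := ⟨fun {X Y} f => inferInstance⟩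
    letI : HasCokernels (ObjectProperty.FullSubcategory (· ∈ B)) := ⟨fun {X Y} f => inferInstance⟩
    letI : ∀ {X Y : ObjectProperty.FullSubcategory (· ∈ B)} (f : X ⟶ Y),
        IsIso (Abelian.coimageImageComparison f) :=
      fun f => auxPerp_isIso_comparison (ObjectProperty.ι (· ∈ B)) f
    exact ⟨Abelian.ofCoimageImageComparisonIsIso, ⟨inferInstance⟩, ⟨inferInstance⟩⟩
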